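/- In the vector space ℝ^ℚ of all real-valued functions on ℚ, the family consisting of the constant function 1, the indicator functions of singletons 1_{q} for q ∈ ℚ, and the indicator functions of open lower sets 1_{(-∞,q)} for q ∈ ℚ, is linearly independent. -/

import Mathlib

lemma aux_below (F : Finset ℚ) (q : ℚ) :
    ∃ x, x < q ∧ x ∉ F ∧ ∀ r ∈ F, r < q → r < x := by
  set G := insert (q - 1) (F.filter (· < q)) with hG
  have hne : G.Nonempty := ⟨q - 1, Finset.mem_insert_self _ _⟩
  set c := G.max' hne with hc
  have hcq : c < q := by
    rw [hc, Finset.max'_lt_iff]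
    intro b hb
    rcases Finset.mem_insert.mp hb with h | h
    · simp [h]
    · exact (Finset.mem_filter.mp h).2
  obtain ⟨x, hx, hxF⟩ := (((Set.Ioo_infinite hcq).diff F.finite_toSet).nonempty)
  exact ⟨x, hx.2, hxF, fun r hr hrq =>
    lt_of_le_of_lt (Finset.le_max' G r (Finset.mem_insert_of_mem (Finset.mem_filter.mpr ⟨hr, hrq⟩))) hx.1⟩

lemma aux_above (F : Finset ℚ) (q : ℚ) :
    ∃ x, q < x ∧ x ∉ F ∧ ∀ r ∈ F, q < r → x < r := by
  set G := insert (q + 1) (F.filter (q < ·)) with hG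
  have hne : G.Nonempty := ⟨q + 1, Finset.mem_insert_self _ _⟩
  set c := G.min' hne with hc
  have hcq : q < c := by
    rw [hc, Finset.lt_min'_iff]
    intro b hb
    rcases Finset.mem_insert.mp hb with h | h
    · simp [h]
    · exact (Finset.mem_filter.mp h).2
  obtain ⟨x, hx, hxF⟩ := (((Set.Ioo_infinite hcq).diff F.finite_toSet).nonempty)
  exact ⟨x, hx.1, hxF, fun r hr hrq =>
    lt_of_lt_of_le hx.2 (Finset.min'_le G r (Finset.mem_insert_of_mem (Finset.mem_filter.mpr ⟨hr, hrq⟩)))⟩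

/-- In `ℝ^ℚ`, the constant function `1`, the indicators of singletons, and the indicators
of open lower sets `(-∞, q)` form a linearly independent family. -/
theorem stmt5 :
    LinearIndependent ℝ
      (fun i : Unit ⊕ ℚ ⊕ ℚ =>
        Sum.elim (fun _ => (fun _ => (1 : ℝ) : ℚ → ℝ))
          (Sum.elim (fun q => Set.indicator {q} (fun _ => (1 : ℝ)))
            (fun q => Set.indicator (Set.Iio q) (fun _ => (1 : ℝ)))) i) := by
  set v : Unit ⊕ ℚ ⊕ ℚ → ℚ → ℝ := fun i =>
        Sum.elim (fun _ => (fun _ => (1 : ℝ) : ℚ → ℝ))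
          (Sum.elim (fun q => Set.indicator {q} (fun _ => (1 : ℝ)))
            (fun q => Set.indicator (Set.Iio q) (fun _ => (1 : ℝ)))) i with hv
  rw [linearIndependent_iff']
  intro s g hsum i hi
  have h : ∀ x : ℚ, ∑ j ∈ s, g j * v j x = 0 := by
    intro x
    have := congrFun hsum x
    simpa [Finset.sum_apply] using this
  set toQ : Unit ⊕ ℚ ⊕ ℚ → ℚ := Sum.elim (fun _ => 0) (Sum.elim id id) with htoQ
  set R : Finset ℚ := s.image toQ with hR
  -- values of v at points
  have vval : ∀ (j : Unit ⊕ ℚ ⊕ ℚ) (x : ℚ),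
      v j x = Sum.elim (fun _ => (1:ℝ))
        (Sum.elim (fun q => if x = q then (1:ℝ) else 0)
          (fun q => if x < q then (1:ℝ) else 0)) j := by
    rintro (u | q | q) x <;> simp [hv, Set.indicator_apply, Pi.single_apply]
  -- Step 1: coefficients of Iio indicators vanish
  have hB : ∀ q : ℚ, Sum.inr (Sum.inr q) ∈ s → g (Sum.inr (Sum.inr q)) = 0 := by
    intro q hq
    obtain ⟨x₁, hx₁q, hx₁R, hx₁⟩ := aux_below R q
    obtain ⟨x₂, hx₂q, hx₂R, hx₂⟩ := aux_above R q
    have key : ∑ j ∈ s, g j * (v j x₁ - v j x₂) = g (Sum.inr (Sum.inr q)) := by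
      rw [Finset.sum_eq_single (Sum.inr (Sum.inr q))]
      · rw [vval, vval]
        simp [hx₁q, not_lt.mpr (le_of_lt hx₂q)]
      · rintro (u | q' | q') hj hne
        · rw [vval, vval]; simp
        · have hq'R : q' ∈ R := by
            rw [hR]; exact Finset.mem_image_of_mem toQ hj
          rw [vval, vval]
          have h1 : x₁ ≠ q' := fun e => hx₁R (e ▸ hq'R)
          have h2 : x₂ ≠ q' := fun e => hx₂R (e ▸ hq'R)
          simp [h1, h2]
        · have hq'R : q' ∈ R := by
            rw [hR]; exact Finset.mem_image_of_mem toQ hj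
          have hne' : q' ≠ q := fun e => hne (by rw [e])
          rw [vval, vval]
          rcases lt_or_gt_of_ne hne' with hlt | hgt
          · have a1 : ¬ x₁ < q' := not_lt.mpr (le_of_lt (hx₁ q' hq'R hlt))
            have a2 : ¬ x₂ < q' := not_lt.mpr (le_of_lt (lt_trans hlt hx₂q))
            simp [a1, a2]
          · have a1 : x₁ < q' := lt_trans hx₁q hgt
            have a2 : x₂ < q' := hx₂ q' hq'R hgt
            simp [a1, a2]
      · intro habs; exact absurd hq habs
    have hzero : ∑ j ∈ s, g j * (v j x₁ - v j x₂) = 0 := by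
      have := h x₁
      have := h x₂
      simp only [mul_sub]
      rw [Finset.sum_sub_distrib, h x₁, h x₂, sub_zero]
    rw [key] at hzero; exact hzero
  -- Step 2: constant coefficient vanishes
  have hC : Sum.inl () ∈ s → g (Sum.inl ()) = 0 := by
    intro hm
    obtain ⟨x, _, hxR, _⟩ := aux_below R 0
    have key : ∑ j ∈ s, g j * v j x = g (Sum.inl ()) := by
      rw [Finset.sum_eq_single (Sum.inl ())]
      · rw [vval]; simp
      · rintro (u | q' | q') hj hne
        · exact absurd rfl (by cases u; exact hne)
        · have hq'R : q' ∈ R := by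
            rw [hR]; exact Finset.mem_image_of_mem toQ hj
          rw [vval]
          have h1 : x ≠ q' := fun e => hxR (e ▸ hq'R)
          simp [h1]
        · rw [hB q' hj]; ring
      · intro habs; exact absurd hm habs
    rw [← key, h x]
  -- Step 3: singleton coefficients vanish
  have hA : ∀ q : ℚ, Sum.inr (Sum.inl q) ∈ s → g (Sum.inr (Sum.inl q)) = 0 := by
    intro q hq
    have key : ∑ j ∈ s, g j * v j q = g (Sum.inr (Sum.inl q)) := by
      rw [Finset.sum_eq_single (Sum.inr (Sum.inl q))]
      · rw [vval]; simp
      · rintro (u | q' | q') hj hne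
        · cases u; rw [hC hj]; ring
        · have hne' : q ≠ q' := fun e => hne (by rw [e])
          rw [vval]; simp [hne']
        · rw [hB q' hj]; ring
      · intro habs; exact absurd hq habs
    rw [← key, h q]
  rcases i with u | q | q
  · cases u; exact hC hi
  · exact hA q hi
  · exact hB q hi
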